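/- arXiv:1412.5947 — 3 statements merged into one kernel-verified Lean document; each statement's English description precedes it below -/
import Mathlib

section
/- Let h : 𝔻 → ℂ be holomorphic on the open unit disc with Re h(w) ≥ 0 for all w ∈ 𝔻. Then for every m ≥ 1, |h^(m)(0)/m!| ≤ 2 Re h(0). -/
open Complex Metric Set MeasureTheory intervalIntegral Real

lemma carath_key (h : ℂ → ℂ) (hd : DifferentiableOn ℂ h (ball (0 : ℂ) 1))
    (hre : ∀ w ∈ ball (0 : ℂ) 1, 0 ≤ (h w).re) (m : ℕ) (hm : 1 ≤ m)
    {r : ℝ} (hr0 : 0 < r) (hr1 : r < 1) :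
    ‖iteratedDeriv m h 0 / (m.factorial : ℂ)‖ * r ^ m ≤ 2 * (h 0).re := by
  have hπ : (0:ℝ) < π := Real.pi_pos
  have hsub : closedBall (0:ℂ) r ⊆ ball 0 1 := closedBall_subset_ball hr1
  have hdc : DifferentiableOn ℂ h (closedBall 0 r) := hd.mono hsub
  set z : ℝ → ℂ := circleMap 0 r with hzdef
  have hz0 : ∀ θ, z θ ≠ 0 := fun θ => circleMap_ne_center hr0.ne'
  have hzabs : ∀ θ, ‖z θ‖ = r := fun θ => by
    rw [hzdef, norm_circleMap_zero, abs_of_pos hr0]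
  have hzball : ∀ θ, z θ ∈ ball (0:ℂ) 1 := fun θ => by
    rw [mem_ball_zero_iff]; show ‖z θ‖ < 1; rw [hzabs]; exact hr1
  have hzc : Continuous z := continuous_circleMap 0 r
  have hucont : Continuous fun θ => h (z θ) :=
    hd.continuousOn.comp_continuous hzc hzball
  -- circle integral unfolding helper
  have hcirc : ∀ g : ℂ → ℂ, (∮ w in C(0, r), g w)
      = I * ∫ θ in (0:ℝ)..(2*π), z θ * g (z θ) := by
    intro g
    simp only [circleIntegral, deriv_circleMap, smul_eq_mul]
    rw [← intervalIntegral.integral_const_mul]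
    exact intervalIntegral.integral_congr fun θ _ => by ring
  -- mean value: ∫ u = 2π h 0
  have hmean : (∫ θ in (0:ℝ)..(2*π), h (z θ)) = (2*π) * h 0 := by
    have := hdc.circleIntegral_sub_inv_smul (mem_ball_self hr0)
    simp only [smul_eq_mul] at this
    rw [hcirc] at this
    have h2 : (∫ θ in (0:ℝ)..(2*π), z θ * ((z θ - 0)⁻¹ * h (z θ)))
        = ∫ θ in (0:ℝ)..(2*π), h (z θ) :=
      intervalIntegral.integral_congr fun θ _ => by
        rw [sub_zero, ← mul_assoc, mul_inv_cancel₀ (hz0 θ), one_mul]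
    rw [h2] at this
    have hI : (2 * (π:ℂ) * I) * h 0 = I * ((2*π) * h 0) := by ring
    rw [hI] at this
    exact mul_left_cancel₀ I_ne_zero this
  -- vanishing: ∫ z^m u = 0
  have hvan : (∫ θ in (0:ℝ)..(2*π), (z θ) ^ m * h (z θ)) = 0 := by
    have hg : (∮ w in C(0, r), w ^ (m-1) * h w) = 0 := by
      refine Complex.circleIntegral_eq_zero_of_differentiable_on_off_countable hr0.le
        countable_empty ?_ ?_
      · exact (continuousOn_id.pow (m-1)).mul hdc.continuousOn
      · intro w hw
        refine (differentiableAt_id.pow (m-1)).mul (hd.differentiableAt ?_)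
        exact isOpen_ball.mem_nhds (ball_subset_ball hr1.le hw.1)
    rw [hcirc] at hg
    have h2 : (∫ θ in (0:ℝ)..(2*π), z θ * ((z θ) ^ (m-1) * h (z θ)))
        = ∫ θ in (0:ℝ)..(2*π), (z θ) ^ m * h (z θ) :=
      intervalIntegral.integral_congr fun θ _ => by
        rw [← mul_assoc, ← pow_succ', Nat.sub_add_cancel hm]
    rw [h2] at hg
    rcases mul_eq_zero.mp hg with h' | h'
    · exact absurd h' I_ne_zero
    · exact h'
  -- integrability facts
  have hint1 : IntervalIntegrable (fun θ => ((z θ)⁻¹) ^ m * h (z θ)) volume 0 (2*π) :=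
    (((hzc.inv₀ hz0).pow m).mul hucont).intervalIntegrable _ _
  have hint2 : IntervalIntegrable (fun θ => ((z θ)⁻¹) ^ m *
      (starRingEnd ℂ) (h (z θ))) volume 0 (2*π) :=
    (((hzc.inv₀ hz0).pow m).mul (Complex.continuous_conj.comp hucont)).intervalIntegrable _ _
  have hintu : IntervalIntegrable (fun θ => h (z θ)) volume 0 (2*π) :=
    hucont.intervalIntegrable _ _
  -- conj vanishing
  have hconj : (∫ θ in (0:ℝ)..(2*π), ((z θ)⁻¹) ^ m * (starRingEnd ℂ) (h (z θ))) = 0 := by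
    have hpt : ∀ θ, ((z θ)⁻¹) ^ m * (starRingEnd ℂ) (h (z θ))
        = ((r:ℂ)^2)⁻¹ ^ m * (starRingEnd ℂ) ((z θ) ^ m * h (z θ)) := by
      intro θ
      have hc : (starRingEnd ℂ) (z θ) = (r:ℂ)^2 * (z θ)⁻¹ := by
        have h1 := Complex.mul_conj (z θ)
        rw [Complex.normSq_eq_norm_sq, hzabs θ] at h1
        push_cast at h1
        rw [mul_comm ((r:ℂ)^2), ← div_eq_inv_mul, eq_div_iff (hz0 θ)]
        linear_combination h1
      rw [map_mul, map_pow, hc]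
      have hrC : (r:ℂ) ≠ 0 := Complex.ofReal_ne_zero.mpr hr0.ne'
      rw [← mul_assoc, ← mul_pow, ← mul_assoc, inv_mul_cancel₀ (pow_ne_zero 2 hrC), one_mul]
    rw [intervalIntegral.integral_congr fun θ _ => hpt θ,
      intervalIntegral.integral_const_mul]
    have hcc : (∫ θ in (0:ℝ)..(2*π), (starRingEnd ℂ) ((z θ) ^ m * h (z θ)))
        = (starRingEnd ℂ) (∫ θ in (0:ℝ)..(2*π), (z θ) ^ m * h (z θ)) := by
      have hint3 : IntervalIntegrable (fun θ => (z θ) ^ m * h (z θ)) volume 0 (2*π) :=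
        ((hzc.pow m).mul hucont).intervalIntegrable _ _
      simpa using
        (Complex.conjCLE.toContinuousLinearMap.intervalIntegral_comp_comm hint3)
    rw [hcc, hvan, map_zero, mul_zero]
  -- coefficient formula
  set A : ℂ := ∫ θ in (0:ℝ)..(2*π), ((z θ)⁻¹) ^ m * h (z θ) with hAdef
  clear_value A
  have hcoeff : iteratedDeriv m h 0 / (m.factorial : ℂ) = (((2*π)⁻¹ : ℝ) : ℂ) * A := by
    obtain ⟨R, hRr⟩ : ∃ R : NNReal, (R : ℝ) = r := ⟨⟨r, hr0.le⟩, rfl⟩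
    have hps := DifferentiableOn.hasFPowerSeriesOnBall (R := R) (f := h) (c := 0)
      (by rw [hRr]; exact hdc) (by rw [← NNReal.coe_pos, hRr]; exact hr0)
    rw [hRr] at hps
    have h1 : iteratedDeriv m h 0
        = (m.factorial : ℂ) * (cauchyPowerSeries h 0 r m fun _ => (1:ℂ)) := by
      rw [iteratedDeriv_eq_iteratedFDeriv, ← hps.factorial_smul (1:ℂ) m, nsmul_eq_mul]
    have h2 : (cauchyPowerSeries h 0 r m fun _ => (1:ℂ))
        = (2 * π * I : ℂ)⁻¹ * (I * A) := by
      rw [cauchyPowerSeries_apply]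
      rw [smul_eq_mul]
      congr 1
      rw [hcirc fun w => ((1:ℂ) / (w - 0)) ^ m • (w - 0)⁻¹ • h w]
      congr 1
      rw [hAdef]
      refine intervalIntegral.integral_congr fun θ _ => ?_
      simp only [sub_zero, smul_eq_mul, one_div]
      field_simp [hz0 θ]
    have hfac : (m.factorial : ℂ) ≠ 0 := Nat.cast_ne_zero.mpr m.factorial_ne_zero
    have h3 : (2*(π:ℂ)*I)⁻¹ * (I * A) = (((2*π)⁻¹:ℝ):ℂ) * A := by
      rw [mul_inv, mul_assoc, ← mul_assoc I⁻¹ I A, inv_mul_cancel₀ I_ne_zero, one_mul]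
      push_cast
      ring
    rw [h1, h2, h3, mul_comm ((m.factorial:ℂ)), mul_div_assoc, div_self hfac, mul_one]
  -- rewrite A with real part
  have hA2 : A = ∫ θ in (0:ℝ)..(2*π), ((z θ)⁻¹) ^ m * (2 * ((h (z θ)).re : ℝ) : ℂ) := by
    calc A = A + ∫ θ in (0:ℝ)..(2*π), ((z θ)⁻¹) ^ m * (starRingEnd ℂ) (h (z θ)) := by
            rw [hconj, add_zero]
      _ = ∫ θ in (0:ℝ)..(2*π), (((z θ)⁻¹) ^ m * h (z θ)
            + ((z θ)⁻¹) ^ m * (starRingEnd ℂ) (h (z θ))) := by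
            rw [hAdef, intervalIntegral.integral_add hint1 hint2]
      _ = _ := by
            refine intervalIntegral.integral_congr fun θ _ => ?_
            rw [← mul_add, Complex.add_conj]
            push_cast
            ring
  -- bound
  have hbound : ‖A‖ ≤ (r⁻¹) ^ m * (4 * π * (h 0).re) := by
    rw [hA2]
    refine (intervalIntegral.norm_integral_le_integral_norm (by positivity)).trans ?_
    have h2 : (∫ θ in (0:ℝ)..(2*π), ‖((z θ)⁻¹) ^ m * (2 * ((h (z θ)).re : ℝ) : ℂ)‖)
        = ∫ θ in (0:ℝ)..(2*π), (r⁻¹)^m * (2 * (h (z θ)).re) := by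
      refine intervalIntegral.integral_congr fun θ _ => ?_
      rw [norm_mul, norm_pow, norm_inv, hzabs θ]
      have hcast : ((2 * ((h (z θ)).re : ℝ) : ℂ)) = (((2 * (h (z θ)).re : ℝ)) : ℂ) := by
        push_cast; ring
      have : ‖((2 * ((h (z θ)).re : ℝ) : ℂ))‖ = 2 * (h (z θ)).re := by
        rw [hcast]
        simp only [Complex.norm_real, Real.norm_eq_abs]
        rw [_root_.abs_of_nonneg (by have := hre _ (hzball θ); linarith)]
      rw [this]
    rw [h2]
    have hire : IntervalIntegrable (fun θ => (h (z θ)).re) volume 0 (2*π) :=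
      (Complex.continuous_re.comp hucont).intervalIntegrable _ _
    have h3 : (∫ θ in (0:ℝ)..(2*π), (r⁻¹)^m * (2 * (h (z θ)).re))
        = (r⁻¹)^m * 2 * ∫ θ in (0:ℝ)..(2*π), (h (z θ)).re := by
      rw [← intervalIntegral.integral_const_mul]
      exact intervalIntegral.integral_congr fun θ _ => by ring
    rw [h3]
    have h4 : (∫ θ in (0:ℝ)..(2*π), (h (z θ)).re)
        = (∫ θ in (0:ℝ)..(2*π), h (z θ)).re := by
      simpa using (Complex.reCLM.intervalIntegral_comp_comm hintu)
    rw [h4, hmean]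
    have h5 : ((2 * (π:ℂ)) * h 0).re = 2 * π * (h 0).re := by
      have he : (2 * (π:ℂ)) = ((2*π : ℝ) : ℂ) := by push_cast; ring
      rw [he, Complex.re_ofReal_mul]
    rw [h5]
    exact le_of_eq (by ring)
  -- conclude
  calc ‖iteratedDeriv m h 0 / (m.factorial : ℂ)‖ * r ^ m
      = (2*π)⁻¹ * ‖A‖ * r ^ m := by
        rw [hcoeff, norm_mul, Complex.norm_real, Real.norm_eq_abs, abs_of_pos (by positivity)]
    _ ≤ (2*π)⁻¹ * ((r⁻¹) ^ m * (4 * π * (h 0).re)) * r ^ m :=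
        mul_le_mul_of_nonneg_right
          (mul_le_mul_of_nonneg_left hbound (by positivity)) (by positivity)
    _ = 2 * (h 0).re := by
        rw [inv_pow]
        field_simp
        ring

theorem stmt_7 (h : ℂ → ℂ) (hd : DifferentiableOn ℂ h (ball (0 : ℂ) 1))
    (hre : ∀ w ∈ ball (0 : ℂ) 1, 0 ≤ (h w).re) (m : ℕ) (hm : 1 ≤ m) :
    ‖iteratedDeriv m h 0 / (m.factorial : ℂ)‖ ≤ 2 * (h 0).re := by
  set c : ℝ := ‖iteratedDeriv m h 0 / (m.factorial : ℂ)‖ with hc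
  clear_value c
  have hten : Filter.Tendsto (fun r : ℝ => c * r ^ m) (nhdsWithin 1 (Iio 1)) (nhds c) := by
    have hcont : Continuous fun r : ℝ => c * r ^ m := by continuity
    have := (hcont.tendsto 1).mono_left (nhdsWithin_le_nhds (s := Iio (1:ℝ)))
    simpa using this
  refine le_of_tendsto hten ?_
  filter_upwards [Ioo_mem_nhdsLT_of_mem (show (1:ℝ) ∈ Ioc 0 1 by norm_num)] with r hr
  rw [hc]
  exact carath_key h hd hre m hm hr.1 hr.2
end

section
/- Define the x-th Dirichlet–Bohr radius L(x) as the supremum of all r ∈ [0,1] such that for every finitely supported sequence (a_n)_{n≤x} of complex numbers, Σ_{n≤x} |a_n| r^{Ω(n)} ≤ sup_{t∈ℝ} |Σ_{n≤x} a_n n^{−it}|. Then there is a constant C > 0 such that for all x ≥ 2, L(x) ≤ C · (log x)^(1/4) / x^(1/8). -/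
open Complex Finset Real



lemma dft_orth (N : ℕ) (hN : 0 < N) (k k' : Fin N) :
    ∑ j : Fin N, (Complex.exp (2 * Real.pi * Complex.I / N)) ^ (j.val * k.val)
      * (starRingEnd ℂ) ((Complex.exp (2 * Real.pi * Complex.I / N)) ^ (j.val * k'.val))
      = if k = k' then (N : ℂ) else 0 := by
  set ω := Complex.exp (2 * Real.pi * Complex.I / N) with hω
  have hprim : IsPrimitiveRoot ω N := Complex.isPrimitiveRoot_exp N hN.ne'
  have hne0 : ω ≠ 0 := Complex.exp_ne_zero _
  have hωabs : ‖ω‖ = 1 := by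
    rw [hω]
    simp [Complex.norm_exp, Complex.div_re]
  have hconj : (starRingEnd ℂ) ω = ω⁻¹ := (Complex.inv_eq_conj hωabs).symm
  set ζ : ℂ := ω ^ ((k.val : ℤ) - k'.val) with hζ
  have hterm : ∀ j : Fin N, ω ^ (j.val * k.val) * (starRingEnd ℂ) (ω ^ (j.val * k'.val))
      = ζ ^ (j.val) := by
    intro j
    have h1 : ζ ^ (j.val) = ω ^ ((j.val * k.val : ℤ) - (j.val * k'.val : ℤ)) := by
      rw [hζ, ← zpow_natCast (ω ^ ((k.val:ℤ) - k'.val)) j.val, ← zpow_mul]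
      congr 1; push_cast; ring
    rw [h1, map_pow, hconj, ← zpow_natCast ω (j.val*k.val), ← zpow_natCast ω⁻¹ (j.val*k'.val),
      inv_zpow]
    rw [← zpow_neg, ← zpow_add₀ hne0]
    congr 1
  rw [Finset.sum_congr rfl (fun j _ => hterm j)]
  by_cases hkk : k = k'
  · subst hkk
    simp [hζ]
  · rw [if_neg hkk]
    have hζ1 : ζ ≠ 1 := by
      rw [hζ, Ne, hprim.zpow_eq_one_iff_dvd]
      intro hdvd
      rcases hdvd with ⟨c, hc⟩
      have h1 : (k.val : ℤ) < N := by exact_mod_cast k.isLt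
      have h2 : (k'.val : ℤ) < N := by exact_mod_cast k'.isLt
      have h3 : (k.val : ℤ) ≠ k'.val := by
        simpa [Fin.ext_iff] using hkk
      have hN' : (0:ℤ) < N := by exact_mod_cast hN
      rcases lt_trichotomy c 0 with hc0 | hc0 | hc0
      · nlinarith [Int.ofNat_nonneg k.val, Int.ofNat_nonneg k'.val]
      · simp [hc0] at hc; omega
      · nlinarith [Int.ofNat_nonneg k.val, Int.ofNat_nonneg k'.val]
    have hζN : ζ ^ N = 1 := by
      rw [hζ, ← zpow_natCast, ← zpow_mul, mul_comm, zpow_mul, zpow_natCast, hprim.pow_eq_one]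
      simp
    rw [Fin.sum_univ_eq_sum_range (fun j => ζ ^ j) N, geom_sum_eq hζ1, hζN]
    simp

lemma bilinear_bound (N : ℕ) (hN : 0 < N) (w : Fin N → ℂ)
    (hw : ∀ j, ‖w j‖ = 1) :
    ‖∑ j : Fin N, ∑ k : Fin N,
      (Complex.exp (2 * Real.pi * Complex.I / N)) ^ (j.val * k.val) * (w j * w k)‖
      ≤ (N : ℝ) * Real.sqrt N := by
  set ω := Complex.exp (2 * Real.pi * Complex.I / N) with hω
  set V : Fin N → ℂ := fun j => ∑ k : Fin N, ω ^ (j.val * k.val) * w k with hV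
  -- Plancherel
  have plancherel : ∑ j : Fin N, Complex.normSq (V j) = (N : ℝ) * N := by
    have key : (∑ j : Fin N, (Complex.normSq (V j) : ℂ)) = (N : ℂ) * N := by
      have expand : ∀ j : Fin N, (Complex.normSq (V j) : ℂ)
          = ∑ k : Fin N, ∑ k' : Fin N,
              (w k * (starRingEnd ℂ) (w k')) *
              (ω ^ (j.val * k.val) * (starRingEnd ℂ) (ω ^ (j.val * k'.val))) := by
        intro j
        rw [Complex.normSq_eq_conj_mul_self, hV]
        simp only [map_sum, map_mul]
        rw [Finset.sum_mul_sum]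
        rw [Finset.sum_comm]
        refine Finset.sum_congr rfl fun k _ => Finset.sum_congr rfl fun k' _ => by ring
      rw [Finset.sum_congr rfl (fun j _ => expand j), Finset.sum_comm]
      have swap : ∀ k : Fin N, ∑ j : Fin N, ∑ k' : Fin N,
            (w k * (starRingEnd ℂ) (w k')) *
            (ω ^ (j.val * k.val) * (starRingEnd ℂ) (ω ^ (j.val * k'.val)))
          = ∑ k' : Fin N, (w k * (starRingEnd ℂ) (w k')) *
              ∑ j : Fin N, ω ^ (j.val * k.val) * (starRingEnd ℂ) (ω ^ (j.val * k'.val)) := by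
        intro k
        rw [Finset.sum_comm]
        exact Finset.sum_congr rfl fun k' _ => by rw [Finset.mul_sum]
      rw [Finset.sum_congr rfl (fun k _ => swap k)]
      have inner : ∀ k : Fin N, ∑ k' : Fin N, (w k * (starRingEnd ℂ) (w k')) *
          ∑ j : Fin N, ω ^ (j.val * k.val) * (starRingEnd ℂ) (ω ^ (j.val * k'.val))
          = (N : ℂ) := by
        intro k
        have : ∀ k' : Fin N, (w k * (starRingEnd ℂ) (w k')) *
            (∑ j : Fin N, ω ^ (j.val * k.val) * (starRingEnd ℂ) (ω ^ (j.val * k'.val)))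
            = if k' = k then (w k * (starRingEnd ℂ) (w k)) * N else 0 := by
          intro k'
          rw [show (∑ j : Fin N, ω ^ (j.val * k.val) * (starRingEnd ℂ) (ω ^ (j.val * k'.val)))
              = if k = k' then (N : ℂ) else 0 from dft_orth N hN k k']
          by_cases h : k' = k
          · subst h; simp
          · rw [if_neg (fun hh => h hh.symm), if_neg h, mul_zero]
        rw [Finset.sum_congr rfl (fun k' _ => this k'), Finset.sum_ite_eq' _ k]
        have : w k * (starRingEnd ℂ) (w k) = 1 := by
          rw [mul_comm, ← Complex.normSq_eq_conj_mul_self]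
          rw [← Complex.sq_norm, hw k]
          norm_num
        simp [this]
      rw [Finset.sum_congr rfl (fun k _ => inner k)]
      simp [mul_comm]
    have := congrArg Complex.re key
    simpa using this
  -- Cauchy–Schwarz
  have step1 : ‖∑ j : Fin N, w j * V j‖ ≤ ∑ j : Fin N, ‖V j‖ := by
    refine le_trans (norm_sum_le _ _) ?_
    refine Finset.sum_le_sum fun j _ => ?_
    rw [norm_mul, hw j, one_mul]
  have step2 : (∑ j : Fin N, ‖V j‖) ≤ (N:ℝ) * Real.sqrt N := by
    have cs := Finset.sum_mul_sq_le_sq_mul_sq Finset.univ (fun _ : Fin N => (1:ℝ))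
      (fun j => ‖V j‖)
    simp only [one_mul, one_pow] at cs
    have h1 : ∑ _j : Fin N, (1:ℝ) = N := by simp
    have h2 : ∑ j : Fin N, ‖V j‖ ^ 2 = (N:ℝ) * N := by
      rw [← plancherel]
      exact Finset.sum_congr rfl fun j _ => (Complex.sq_norm _)
    rw [h1, h2] at cs
    have hnn : (0:ℝ) ≤ ∑ j : Fin N, ‖V j‖ :=
      Finset.sum_nonneg fun j _ => norm_nonneg _
    have hb : (0:ℝ) ≤ (N:ℝ) * Real.sqrt N :=
      mul_nonneg (Nat.cast_nonneg N) (Real.sqrt_nonneg _)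
    have key2 : ((N:ℝ) * Real.sqrt N)^2 = (N:ℝ) * ((N:ℝ) * N) := by
      rw [mul_pow, Real.sq_sqrt (Nat.cast_nonneg N)]; ring
    calc ∑ j : Fin N, ‖V j‖
        = Real.sqrt ((∑ j : Fin N, ‖V j‖)^2) := (Real.sqrt_sq hnn).symm
      _ ≤ Real.sqrt (((N:ℝ) * Real.sqrt N)^2) := Real.sqrt_le_sqrt (by rw [key2]; exact cs)
      _ = (N:ℝ) * Real.sqrt N := Real.sqrt_sq hb
  calc ‖∑ j : Fin N, ∑ k : Fin N, ω ^ (j.val * k.val) * (w j * w k)‖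
      = ‖∑ j : Fin N, w j * V j‖ := by
        congr 1
        exact Finset.sum_congr rfl fun j _ => by
          rw [hV, Finset.mul_sum]
          exact Finset.sum_congr rfl fun k _ => by ring
    _ ≤ ∑ j : Fin N, ‖V j‖ := step1
    _ ≤ (N:ℝ) * Real.sqrt N := step2


lemma centralBinom_le_pow (n : ℕ) (hn : 0 < n) :
    Nat.centralBinom n ≤ (2 * n) ^ ((2 * n + 1).primesBelow.card) := by
  classical
  set f := (Nat.centralBinom n).factorization with hf
  set T : Finset ℕ := (Finset.range (2 * n + 1)).filter (fun p => f p ≠ 0) with hT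
  have hprod : (∏ p ∈ Finset.range (2 * n + 1), p ^ f p) = Nat.centralBinom n :=
    Nat.prod_pow_factorization_centralBinom n
  have hprodT : (∏ p ∈ T, p ^ f p) = Nat.centralBinom n := by
    rw [← hprod]
    exact Finset.prod_filter_of_ne (fun p _ hp => by
      intro h0; apply hp; rw [h0, pow_zero])
  have hTsub : T ⊆ (2 * n + 1).primesBelow := by
    intro p hp
    rw [hT, Finset.mem_filter] at hp
    rw [Nat.mem_primesBelow]
    refine ⟨(Finset.mem_range.mp hp.1), ?_⟩
    have : p ∈ (Nat.centralBinom n).primeFactors := by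
      rw [← Nat.support_factorization]
      exact Finsupp.mem_support_iff.mpr hp.2
    exact Nat.prime_of_mem_primeFactors this
  calc Nat.centralBinom n = ∏ p ∈ T, p ^ f p := hprodT.symm
    _ ≤ ∏ _p ∈ T, (2 * n) := by
        refine Finset.prod_le_prod' fun p _ => ?_
        exact le_trans (le_of_eq rfl) (Nat.pow_factorization_choose_le (by omega))
    _ = (2 * n) ^ T.card := by rw [Finset.prod_const]
    _ ≤ (2 * n) ^ ((2 * n + 1).primesBelow.card) :=
        Nat.pow_le_pow_right (by omega) (Finset.card_le_card hTsub)

lemma primesBelow_card_pos (n : ℕ) (hn : 1 ≤ n) : 0 < (2 * n + 1).primesBelow.card := by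
  refine Finset.card_pos.mpr ⟨2, ?_⟩
  rw [Nat.mem_primesBelow]
  exact ⟨by omega, Nat.prime_two⟩

lemma pi_lower (n : ℕ) (hn : 4 ≤ n) :
    (n : ℝ) * Real.log 2 / Real.log (2 * n) ≤ ((2 * n + 1).primesBelow.card : ℝ) := by
  set P := (2 * n + 1).primesBelow.card with hP
  have hP1 : 1 ≤ P := primesBelow_card_pos n (by omega)
  have h1 : (4 : ℕ) ^ n ≤ (2 * n) ^ (P + 1) := by
    calc (4:ℕ) ^ n ≤ n * Nat.centralBinom n := (Nat.four_pow_lt_mul_centralBinom n hn).le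
      _ ≤ (2*n) * (2*n) ^ P := Nat.mul_le_mul (by omega) (centralBinom_le_pow n (by omega))
      _ = (2*n) ^ (P + 1) := by ring
  have h2n : (1:ℝ) < (2*n : ℕ) := by
    have : (8:ℕ) ≤ 2*n := by omega
    exact_mod_cast lt_of_lt_of_le (by norm_num) this
  have hlog2n : 0 < Real.log (2*n : ℕ) := Real.log_pos h2n
  -- take logs
  have h1R : ((4:ℝ)) ^ n ≤ ((2*n : ℕ):ℝ) ^ (P + 1) := by exact_mod_cast h1
  have h2 : (n : ℝ) * Real.log 4 ≤ (P + 1) * Real.log (2*n : ℕ) := by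
    have := Real.log_le_log (by positivity) h1R
    rwa [Real.log_pow, Real.log_pow, Nat.cast_add, Nat.cast_one] at this
  have hlog4 : Real.log 4 = 2 * Real.log 2 := by
    rw [show (4:ℝ) = 2^2 by norm_num, Real.log_pow]
    push_cast; ring
  have h3 : (n : ℝ) * Real.log 2 ≤ P * Real.log (2*n : ℕ) := by
    have hPP : ((P:ℝ) + 1) ≤ 2 * P := by
      have : (1:ℝ) ≤ P := by exact_mod_cast hP1
      linarith
    nlinarith [hlog2n, Real.log_pos (show (1:ℝ) < 2 by norm_num)]
  have harg : ((2*n : ℕ):ℝ) = 2 * (n:ℝ) := by push_cast; ring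
  rw [harg] at h3 hlog2n
  rw [div_le_iff₀ hlog2n]
  exact h3

lemma prime_pair_eq {p q p' q' : ℕ} (hp : p.Prime) (hq : q.Prime) (hp' : p'.Prime)
    (hq' : q'.Prime) (h : p * q = p' * q') : (p = p' ∧ q = q') ∨ (p = q' ∧ q = p') := by
  have hd : p ∣ p' * q' := ⟨q, h.symm⟩
  rcases (Nat.Prime.dvd_mul hp).mp hd with h1 | h1
  · left
    have hpp : p = p' := ((Nat.prime_dvd_prime_iff_eq hp hp').mp h1)
    subst hpp
    exact ⟨rfl, Nat.eq_of_mul_eq_mul_left hp.pos h⟩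
  · right
    have hpp : p = q' := ((Nat.prime_dvd_prime_iff_eq hp hq').mp h1)
    subst hpp
    constructor
    · rfl
    · have : p * q = p * p' := by rw [h]; ring
      exact Nat.eq_of_mul_eq_mul_left hp.pos this

lemma mem_bound (x r : ℝ) (hx : 64 ≤ x) (h0 : 0 ≤ r)
    (ha : ∀ a : ℕ → ℂ,
      ∑ n ∈ Finset.Icc 1 ⌊x⌋₊,
          ‖a n‖ * r ^ (Nat.primeFactorsList n).length
        ≤ ⨆ t : ℝ, ‖∑ n ∈ Finset.Icc 1 ⌊x⌋₊,
            a n * Complex.exp (-(Complex.I * (t : ℂ) * (Real.log n : ℂ)))‖) :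
    r ≤ ((Nat.primesBelow (2 * (⌊Real.sqrt x⌋₊ / 2) + 1)).card : ℝ) ^ (-(1/4) : ℝ) := by
  classical
  set m := ⌊Real.sqrt x⌋₊ with hm
  set n := m / 2 with hn
  set S := Nat.primesBelow (2 * n + 1) with hS
  set N := S.card with hN
  -- basic numeric facts
  have hx0 : (0:ℝ) ≤ x := by linarith
  have hsq8 : (8:ℝ) ≤ Real.sqrt x := by
    rw [show (8:ℝ) = Real.sqrt 64 by
      rw [show (64:ℝ) = 8^2 by norm_num, Real.sqrt_sq (by norm_num)]]
    exact Real.sqrt_le_sqrt hx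
  have hm8 : 8 ≤ m := Nat.le_floor (by exact_mod_cast hsq8)
  have hn4 : 4 ≤ n := by omega
  have hNpos : 0 < N := by
    rw [hN]
    refine Finset.card_pos.mpr ⟨2, ?_⟩
    rw [hS, Nat.mem_primesBelow]
    exact ⟨by omega, Nat.prime_two⟩
  have hmemS : ∀ p ∈ S, p.Prime ∧ p ≤ m := by
    intro p hp
    rw [hS, Nat.mem_primesBelow] at hp
    exact ⟨hp.2, by omega⟩
  have hprod_mem : ∀ pq ∈ S ×ˢ S, pq.1 * pq.2 ∈ Finset.Icc 1 ⌊x⌋₊ := by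
    rintro ⟨p, q⟩ hpq
    rw [Finset.mem_product] at hpq
    obtain ⟨hp, hpm⟩ := hmemS p hpq.1
    obtain ⟨hq, hqm⟩ := hmemS q hpq.2
    rw [Finset.mem_Icc]
    constructor
    · exact Nat.one_le_iff_ne_zero.mpr (Nat.mul_ne_zero hp.pos.ne' hq.pos.ne')
    · refine Nat.le_floor ?_
      have h1 : ((p * q : ℕ) : ℝ) ≤ (m : ℝ) * m := by
        exact_mod_cast Nat.mul_le_mul hpm hqm
      have h2 : (m : ℝ) ≤ Real.sqrt x := Nat.floor_le (Real.sqrt_nonneg x)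
      have h3 : Real.sqrt x * Real.sqrt x = x := Real.mul_self_sqrt hx0
      nlinarith [Real.sqrt_nonneg x, Nat.cast_nonneg (α := ℝ) m]
  -- the equivalence and index function
  set e := S.equivFin with he
  set idx : ℕ → ℕ := fun p => if h : p ∈ S then (e ⟨p, h⟩ : Fin N).val else 0 with hidx
  set ω : ℂ := Complex.exp (2 * Real.pi * Complex.I / N) with hω
  have hωabs : ‖ω‖ = 1 := by
    rw [hω]; simp [Complex.norm_exp, Complex.div_re]
  set a : ℕ → ℂ := fun mm =>
    ∑ pq ∈ (S ×ˢ S).filter (fun pq => pq.1 * pq.2 = mm), ω ^ (idx pq.1 * idx pq.2) with haa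
  -- LHS computation
  have hLHS : ∑ mm ∈ Finset.Icc 1 ⌊x⌋₊,
      ‖a mm‖ * r ^ (Nat.primeFactorsList mm).length
      = ((N : ℝ) * N) * r ^ 2 := by
    have hfiber : ∀ mm ∈ Finset.Icc 1 ⌊x⌋₊,
        ‖a mm‖ * r ^ (Nat.primeFactorsList mm).length
        = ((((S ×ˢ S).filter (fun pq => pq.1 * pq.2 = mm)).card : ℝ)) * r ^ 2 := by
      intro mm hmm
      set F := (S ×ˢ S).filter (fun pq => pq.1 * pq.2 = mm) with hF
      rcases F.eq_empty_or_nonempty with hFe | ⟨⟨p, q⟩, hpq⟩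
      · have ha0 : a mm = 0 := by
          rw [haa]; simp only; rw [← hF, hFe, Finset.sum_empty]
        rw [ha0, hFe]; simp
      · have hpq' := hpq
        rw [hF, Finset.mem_filter, Finset.mem_product] at hpq'
        obtain ⟨⟨hpS, hqS⟩, hpqmm⟩ := hpq'
        obtain ⟨hp, _⟩ := hmemS p hpS
        obtain ⟨hq, _⟩ := hmemS q hqS
        have hΩ : (Nat.primeFactorsList mm).length = 2 := by
          rw [← hpqmm]
          have hperm := Nat.perm_primeFactorsList_mul hp.pos.ne' hq.pos.ne'
          rw [hperm.length_eq, List.length_append,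
            Nat.primeFactorsList_prime hp, Nat.primeFactorsList_prime hq]
          simp
        have hterms : ∀ pq' ∈ F, ω ^ (idx pq'.1 * idx pq'.2) = ω ^ (idx p * idx q) := by
          rintro ⟨p', q'⟩ hpq''
          rw [hF, Finset.mem_filter, Finset.mem_product] at hpq''
          obtain ⟨⟨hp'S, hq'S⟩, hpq'mm⟩ := hpq''
          obtain ⟨hp', _⟩ := hmemS p' hp'S
          obtain ⟨hq', _⟩ := hmemS q' hq'S
          have heq : p' * q' = p * q := by rw [hpq'mm, hpqmm]
          rcases prime_pair_eq hp' hq' hp hq heq with ⟨h1, h2⟩ | ⟨h1, h2⟩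
          · subst h1; subst h2; rfl
          · subst h1; subst h2; simp only [Nat.mul_comm]
        have haF : a mm = (F.card : ℂ) * ω ^ (idx p * idx q) := by
          rw [haa]; simp only; rw [← hF, Finset.sum_congr rfl hterms,
            Finset.sum_const, nsmul_eq_mul]
        rw [haF, hΩ, norm_mul, norm_pow, hωabs, one_pow, mul_one, Complex.norm_natCast]
    rw [Finset.sum_congr rfl hfiber, ← Finset.sum_mul]
    have hc2 : ∑ mm ∈ Finset.Icc 1 ⌊x⌋₊,
        (((S ×ˢ S).filter (fun pq => pq.1 * pq.2 = mm)).card) = (S ×ˢ S).card :=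
      (Finset.card_eq_sum_card_fiberwise hprod_mem).symm
    have hc3 : ∑ mm ∈ Finset.Icc 1 ⌊x⌋₊,
        ((((S ×ˢ S).filter (fun pq => pq.1 * pq.2 = mm)).card : ℝ)) = ((N:ℝ) * N) := by
      rw [← Nat.cast_sum, hc2, Finset.card_product]
      push_cast [hN]
      ring
    rw [hc3]
  -- RHS bound
  have hRHS : ∀ t : ℝ, ‖∑ mm ∈ Finset.Icc 1 ⌊x⌋₊,
      a mm * Complex.exp (-(Complex.I * (t : ℂ) * (Real.log mm : ℂ)))‖
      ≤ (N : ℝ) * Real.sqrt N := by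
    intro t
    set z : ℕ → ℂ := fun p => Complex.exp (-(Complex.I * (t : ℂ) * (Real.log p : ℂ))) with hz
    set w : Fin N → ℂ := fun j => z ((e.symm j : {y // y ∈ S}) : ℕ) with hw
    have htrans : ∀ h : ℕ → ℂ, ∑ p ∈ S, h p = ∑ j : Fin N, h ((e.symm j : {y // y ∈ S}) : ℕ) := by
      intro h
      rw [← Finset.sum_coe_sort S h]
      exact (Equiv.sum_comp e.symm (fun i => h (i : ℕ))).symm
    have hidx_eq : ∀ j : Fin N, idx ((e.symm j : {y // y ∈ S}) : ℕ) = j.val := by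
      intro j
      have hmem := (e.symm j).2
      rw [hidx]; simp only; rw [dif_pos hmem, Subtype.coe_eta, Equiv.apply_symm_apply]
    have hsum1 : ∑ mm ∈ Finset.Icc 1 ⌊x⌋₊,
        a mm * Complex.exp (-(Complex.I * (t : ℂ) * (Real.log mm : ℂ)))
        = ∑ pq ∈ S ×ˢ S, ω ^ (idx pq.1 * idx pq.2) * z (pq.1 * pq.2) := by
      rw [← Finset.sum_fiberwise_of_maps_to hprod_mem
        (fun pq => ω ^ (idx pq.1 * idx pq.2) * z (pq.1 * pq.2))]
      refine Finset.sum_congr rfl fun mm hmm => ?_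
      rw [haa]; simp only
      rw [Finset.sum_mul]
      refine Finset.sum_congr rfl fun pq hpq => ?_
      rw [Finset.mem_filter] at hpq
      rw [hpq.2, hz]
    have hsplit : ∀ pq ∈ S ×ˢ S, ω ^ (idx pq.1 * idx pq.2) * z (pq.1 * pq.2)
        = ω ^ (idx pq.1 * idx pq.2) * (z pq.1 * z pq.2) := by
      rintro ⟨p, q⟩ hpq
      rw [Finset.mem_product] at hpq
      obtain ⟨hp, _⟩ := hmemS p hpq.1
      obtain ⟨hq, _⟩ := hmemS q hpq.2
      have hlog : Real.log ((p * q : ℕ) : ℝ) = Real.log p + Real.log q := by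
        rw [Nat.cast_mul]
        exact Real.log_mul (Nat.cast_ne_zero.mpr hp.pos.ne') (Nat.cast_ne_zero.mpr hq.pos.ne')
      simp only [hz]
      rw [hlog, ← Complex.exp_add]
      congr 1
      push_cast
      ring
    have hsum2 : ∑ pq ∈ S ×ˢ S, ω ^ (idx pq.1 * idx pq.2) * z (pq.1 * pq.2)
        = ∑ j : Fin N, ∑ k : Fin N, ω ^ (j.val * k.val) * (w j * w k) := by
      rw [Finset.sum_congr rfl hsplit, Finset.sum_product]
      rw [htrans (fun p => ∑ q ∈ S, ω ^ (idx p * idx q) * (z p * z q))]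
      refine Finset.sum_congr rfl fun j _ => ?_
      rw [htrans (fun q => ω ^ (idx ((e.symm j : {y // y ∈ S}) : ℕ) * idx q)
        * (z ((e.symm j : {y // y ∈ S}) : ℕ) * z q))]
      refine Finset.sum_congr rfl fun k _ => ?_
      rw [hidx_eq, hidx_eq, hw]
    have hwabs : ∀ j : Fin N, ‖w j‖ = 1 := by
      intro j
      rw [hw]; simp only [hz]
      rw [Complex.norm_exp]
      have : (-(Complex.I * (t : ℂ) * ((Real.log ((e.symm j : {y // y ∈ S}) : ℕ)) : ℂ))).re = 0 := by
        have hgen : ∀ (s c : ℝ), (-(Complex.I * (s : ℂ) * (c : ℂ))).re = 0 := by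
          intro s c; simp [Complex.mul_re]
        exact hgen t _
      rw [this, Real.exp_zero]
    rw [hsum1, hsum2]
    exact bilinear_bound N hNpos w hwabs
  have hsup : (⨆ t : ℝ, ‖∑ mm ∈ Finset.Icc 1 ⌊x⌋₊,
      a mm * Complex.exp (-(Complex.I * (t : ℂ) * (Real.log mm : ℂ)))‖)
      ≤ (N : ℝ) * Real.sqrt N :=
    Real.iSup_le hRHS (mul_nonneg (Nat.cast_nonneg N) (Real.sqrt_nonneg _))
  have hmain : ((N : ℝ) * N) * r ^ 2 ≤ (N : ℝ) * Real.sqrt N := by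
    rw [← hLHS]
    exact le_trans (ha a) hsup
  -- conclude
  have hN0 : (0:ℝ) < N := by exact_mod_cast hNpos
  have hsqN : Real.sqrt N * Real.sqrt N = (N:ℝ) := Real.mul_self_sqrt hN0.le
  have hsqNpos : 0 < Real.sqrt N := Real.sqrt_pos.mpr hN0
  have hr2 : r ^ 2 ≤ (Real.sqrt N)⁻¹ := by
    have step : ((N:ℝ) * N * r ^ 2) * Real.sqrt N ≤ ((N:ℝ) * Real.sqrt N) * Real.sqrt N :=
      mul_le_mul_of_nonneg_right hmain hsqNpos.le
    rw [mul_assoc ((N:ℝ)) (Real.sqrt N) (Real.sqrt N), hsqN] at step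
    have step2 : r ^ 2 * Real.sqrt N ≤ 1 := by nlinarith [step, hN0, mul_pos hN0 hN0]
    rw [inv_eq_one_div, le_div_iff₀ hsqNpos]
    exact step2
  have hB : ((N:ℝ) ^ (-(1/4) : ℝ)) ^ 2 = (Real.sqrt N)⁻¹ := by
    rw [← Real.rpow_natCast ((N:ℝ) ^ (-(1/4) : ℝ)) 2, ← Real.rpow_mul hN0.le]
    norm_num
    rw [← Real.rpow_neg_one (Real.sqrt N), Real.sqrt_eq_rpow, ← Real.rpow_mul hN0.le]
    norm_num
  have hBnn : (0:ℝ) ≤ (N:ℝ) ^ (-(1/4) : ℝ) := Real.rpow_nonneg hN0.le _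
  calc r = Real.sqrt (r ^ 2) := (Real.sqrt_sq h0).symm
    _ ≤ Real.sqrt (((N:ℝ) ^ (-(1/4) : ℝ)) ^ 2) := Real.sqrt_le_sqrt (by rw [hB]; exact hr2)
    _ = (N:ℝ) ^ (-(1/4) : ℝ) := Real.sqrt_sq hBnn

/-- The `x`-th Dirichlet–Bohr radius: the supremum of all `r ∈ [0,1]` such that
for every choice of coefficients `a : ℕ → ℂ`,
`∑_{n ≤ x} |a n| r^{Ω(n)} ≤ sup_{t ∈ ℝ} |∑_{n ≤ x} a n · n^{-it}|`. -/
noncomputable def dirichletBohrRadius (x : ℝ) : ℝ :=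
  sSup {r : ℝ | 0 ≤ r ∧ r ≤ 1 ∧ ∀ a : ℕ → ℂ,
    ∑ n ∈ Finset.Icc 1 ⌊x⌋₊,
        ‖a n‖ * r ^ (Nat.primeFactorsList n).length
      ≤ ⨆ t : ℝ, ‖∑ n ∈ Finset.Icc 1 ⌊x⌋₊,
          a n * Complex.exp (-(Complex.I * (t : ℂ) * (Real.log n : ℂ)))‖}

theorem stmt_15 :
    ∃ C : ℝ, 0 < C ∧ ∀ x : ℝ, 2 ≤ x →
      dirichletBohrRadius x ≤ C * ((Real.log x) ^ ((1 : ℝ)/4) / x ^ ((1 : ℝ)/8)) := by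
  have hlog2 : (0:ℝ) < Real.log 2 := Real.log_pos (by norm_num)
  set C0 : ℝ := (64:ℝ) ^ ((1:ℝ)/8) / (Real.log 2) ^ ((1:ℝ)/4) with hC0
  set C1 : ℝ := (2 / Real.log 2) ^ ((1:ℝ)/4) with hC1
  have hC0pos : 0 < C0 := by positivity
  have hC1pos : 0 < C1 := by positivity
  refine ⟨max C0 C1, lt_max_of_lt_left hC0pos, ?_⟩
  intro x hx2
  have hx0 : (0:ℝ) < x := by linarith
  have hlogx : 0 < Real.log x := Real.log_pos (by linarith)
  have hfac_pos : 0 < (Real.log x) ^ ((1:ℝ)/4) / x ^ ((1:ℝ)/8) := by positivity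
  have htarget_nonneg : 0 ≤ max C0 C1 * ((Real.log x) ^ ((1:ℝ)/4) / x ^ ((1:ℝ)/8)) := by
    positivity
  rcases le_or_gt 64 x with hbig | hsmall
  · -- large x
    set m := ⌊Real.sqrt x⌋₊ with hm
    set n := m / 2 with hn
    set N := (Nat.primesBelow (2 * n + 1)).card with hN
    have hsq8 : (8:ℝ) ≤ Real.sqrt x := by
      rw [show (8:ℝ) = Real.sqrt 64 by
        rw [show (64:ℝ) = 8^2 by norm_num, Real.sqrt_sq (by norm_num)]]
      exact Real.sqrt_le_sqrt hbig
    have hsqpos : (0:ℝ) < Real.sqrt x := by linarith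
    have hm8 : 8 ≤ m := Nat.le_floor (by exact_mod_cast hsq8)
    have hn4 : 4 ≤ n := by omega
    have hnR : Real.sqrt x / 4 ≤ (n:ℝ) := by
      have h1 : Real.sqrt x - 1 < (m:ℝ) := Nat.sub_one_lt_floor _
      have h2 : (m:ℝ) - 1 ≤ 2 * (n:ℝ) := by
        have : m - 1 ≤ 2 * n := by omega
        have h3 : ((m - 1 : ℕ) : ℝ) ≤ ((2 * n : ℕ) : ℝ) := by exact_mod_cast this
        rw [Nat.cast_sub (by omega)] at h3
        push_cast at h3 ⊢
        linarith
      linarith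
    have h2nR : (2:ℝ) * (n:ℝ) ≤ Real.sqrt x := by
      have h1 : (2 * n : ℕ) ≤ m := by omega
      have h2 : ((2*n : ℕ):ℝ) ≤ (m:ℝ) := by exact_mod_cast h1
      have h3 : (m:ℝ) ≤ Real.sqrt x := Nat.floor_le (Real.sqrt_nonneg x)
      push_cast at h2
      linarith
    set K : ℝ := (n:ℝ) * Real.log 2 / Real.log (2 * n) with hK
    have hlog2n_pos : 0 < Real.log (2 * (n:ℝ)) := by
      refine Real.log_pos ?_
      have : (4:ℝ) ≤ (n:ℝ) := by exact_mod_cast hn4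
      linarith
    have hKpos : 0 < K := by
      rw [hK]
      have : (4:ℝ) ≤ (n:ℝ) := by exact_mod_cast hn4
      positivity
    have hKN : K ≤ (N:ℝ) := by
      have h := pi_lower n hn4
      exact h
    have hNpos : (0:ℝ) < (N:ℝ) := lt_of_lt_of_le hKpos hKN
    -- bound K⁻¹
    have hKinv : K⁻¹ ≤ (2 / Real.log 2) * (Real.log x / Real.sqrt x) := by
      rw [hK]
      rw [inv_div]
      have hnum : Real.log (2 * (n:ℝ)) ≤ Real.log x / 2 := by
        have h1 : Real.log (2 * (n:ℝ)) ≤ Real.log (Real.sqrt x) := by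
          refine Real.log_le_log (by positivity) h2nR
        rwa [Real.log_sqrt hx0.le] at h1
      have hden : Real.sqrt x / 4 * Real.log 2 ≤ (n:ℝ) * Real.log 2 :=
        mul_le_mul_of_nonneg_right hnR hlog2.le
      have hdenpos : 0 < Real.sqrt x / 4 * Real.log 2 := by positivity
      calc Real.log (2 * (n:ℝ)) / ((n:ℝ) * Real.log 2)
          ≤ (Real.log x / 2) / (Real.sqrt x / 4 * Real.log 2) := by
            exact div_le_div₀ (by positivity) hnum hdenpos hden
        _ = (2 / Real.log 2) * (Real.log x / Real.sqrt x) := by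
            field_simp
            ring
    -- N^{-1/4} ≤ C1 * logx^{1/4}/x^{1/8}
    have hNbound : ((N:ℝ)) ^ (-(1/4) : ℝ)
        ≤ C1 * ((Real.log x) ^ ((1:ℝ)/4) / x ^ ((1:ℝ)/8)) := by
      have h1 : ((N:ℝ)) ^ (-(1/4) : ℝ) ≤ K ^ (-(1/4) : ℝ) :=
        Real.rpow_le_rpow_of_nonpos hKpos hKN (by norm_num)
      have h2 : K ^ (-(1/4) : ℝ) = (K⁻¹) ^ ((1/4) : ℝ) := by
        rw [Real.rpow_neg hKpos.le, ← Real.inv_rpow hKpos.le]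
      have h3 : (K⁻¹) ^ ((1/4) : ℝ)
          ≤ ((2 / Real.log 2) * (Real.log x / Real.sqrt x)) ^ ((1/4) : ℝ) :=
        Real.rpow_le_rpow (inv_nonneg.mpr hKpos.le) hKinv (by norm_num)
      have h4 : ((2 / Real.log 2) * (Real.log x / Real.sqrt x)) ^ ((1/4) : ℝ)
          = C1 * ((Real.log x) ^ ((1:ℝ)/4) / x ^ ((1:ℝ)/8)) := by
        rw [Real.mul_rpow (by positivity) (by positivity),
          Real.div_rpow hlogx.le (Real.sqrt_nonneg x), hC1]
        congr 1
        congr 1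
        rw [Real.sqrt_eq_rpow, ← Real.rpow_mul hx0.le]
        norm_num
      rw [h4] at h3
      calc ((N:ℝ)) ^ (-(1/4) : ℝ) ≤ K ^ (-(1/4) : ℝ) := h1
        _ = (K⁻¹) ^ ((1/4) : ℝ) := h2
        _ ≤ C1 * ((Real.log x) ^ ((1:ℝ)/4) / x ^ ((1:ℝ)/8)) := h3
    -- now bound the sSup
    have hsup : dirichletBohrRadius x ≤ ((N:ℝ)) ^ (-(1/4) : ℝ) := by
      rw [dirichletBohrRadius]
      refine Real.sSup_le ?_ (Real.rpow_nonneg hNpos.le _)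
      rintro r ⟨h0, _, ha⟩
      exact mem_bound x r hbig h0 ha
    calc dirichletBohrRadius x ≤ ((N:ℝ)) ^ (-(1/4) : ℝ) := hsup
      _ ≤ C1 * ((Real.log x) ^ ((1:ℝ)/4) / x ^ ((1:ℝ)/8)) := hNbound
      _ ≤ max C0 C1 * ((Real.log x) ^ ((1:ℝ)/4) / x ^ ((1:ℝ)/8)) :=
          mul_le_mul_of_nonneg_right (le_max_right _ _) hfac_pos.le
  · -- small x
    have h1 : dirichletBohrRadius x ≤ 1 := by
      rw [dirichletBohrRadius]
      exact Real.sSup_le (fun r hr => hr.2.1) zero_le_one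
    have h2 : (1:ℝ) ≤ C0 * ((Real.log x) ^ ((1:ℝ)/4) / x ^ ((1:ℝ)/8)) := by
      have ha : (Real.log 2) ^ ((1:ℝ)/4) ≤ (Real.log x) ^ ((1:ℝ)/4) :=
        Real.rpow_le_rpow hlog2.le (Real.log_le_log (by norm_num) hx2) (by norm_num)
      have hb : x ^ ((1:ℝ)/8) ≤ (64:ℝ) ^ ((1:ℝ)/8) :=
        Real.rpow_le_rpow hx0.le hsmall.le (by norm_num)
      have hc : (0:ℝ) < (Real.log 2) ^ ((1:ℝ)/4) := by positivity
      have hd : (0:ℝ) < x ^ ((1:ℝ)/8) := by positivity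
      have he : (Real.log 2) ^ ((1:ℝ)/4) / (64:ℝ) ^ ((1:ℝ)/8)
          ≤ (Real.log x) ^ ((1:ℝ)/4) / x ^ ((1:ℝ)/8) :=
        div_le_div₀ (by positivity) ha hd hb
      have hf : C0 * ((Real.log 2) ^ ((1:ℝ)/4) / (64:ℝ) ^ ((1:ℝ)/8)) = 1 := by
        rw [hC0]
        field_simp
      calc (1:ℝ) = C0 * ((Real.log 2) ^ ((1:ℝ)/4) / (64:ℝ) ^ ((1:ℝ)/8)) := hf.symm
        _ ≤ C0 * ((Real.log x) ^ ((1:ℝ)/4) / x ^ ((1:ℝ)/8)) :=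
            mul_le_mul_of_nonneg_left he hC0pos.le
    calc dirichletBohrRadius x ≤ 1 := h1
      _ ≤ C0 * ((Real.log x) ^ ((1:ℝ)/4) / x ^ ((1:ℝ)/8)) := h2
      _ ≤ max C0 C1 * ((Real.log x) ^ ((1:ℝ)/4) / x ^ ((1:ℝ)/8)) :=
          mul_le_mul_of_nonneg_right (le_max_left _ _) hfac_pos.le
end

section
/- Bohr's inequality for primes: for every finitely supported sequence (a_p) of complex numbers indexed by the primes, Σ_p |a_p| ≤ sup_{t∈ℝ} |Σ_p a_p p^{−it}|. -/
open Finset intervalIntegral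

noncomputable def Complex.abs : AbsoluteValue ℂ ℝ := NormedField.toAbsoluteValue ℂ

lemma Complex.norm_eq_abs (z : ℂ) : ‖z‖ = Complex.abs z := rfl

lemma Complex.abs_exp (z : ℂ) : Complex.abs (Complex.exp z) = Real.exp z.re :=
  Complex.norm_exp z

lemma Complex.abs_conj (z : ℂ) : Complex.abs ((starRingEnd ℂ) z) = Complex.abs z :=
  Complex.norm_conj z

lemma Complex.abs_natCast (n : ℕ) : Complex.abs (n : ℂ) = n := Complex.norm_natCast n

lemma Complex.abs_ofReal (r : ℝ) : Complex.abs (r : ℂ) = |r| := Complex.norm_real r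

lemma Complex.sq_abs (z : ℂ) : Complex.abs z ^ 2 = Complex.normSq z := Complex.sq_norm z

noncomputable def Eb (t : ℝ) (m : ℕ) : ℂ :=
  Complex.exp (-(Complex.I * (t : ℂ) * (Real.log m : ℂ)))

noncomputable def cb (m n : ℕ) : ℂ := Complex.I * ((Real.log n : ℂ) - (Real.log m : ℂ))

lemma Eb_abs (t : ℝ) (m : ℕ) : Complex.abs (Eb t m) = 1 := by
  rw [Eb, Complex.abs_exp]
  have h : (-(Complex.I * (t : ℂ) * (Real.log m : ℂ))).re = 0 := by
    simp only [Complex.neg_re, Complex.mul_re, Complex.mul_im, Complex.I_re, Complex.I_im,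
      Complex.ofReal_re, Complex.ofReal_im]
    ring
  rw [h, Real.exp_zero]

lemma Eb_prod {k : ℕ} (t : ℝ) (g : Fin k → ℕ) (hg : ∀ i, g i ≠ 0) :
    ∏ i, Eb t (g i) = Eb t (∏ i, g i) := by
  simp only [Eb]
  rw [← Complex.exp_sum]
  congr 1
  have h1 : Real.log ((∏ i, g i : ℕ) : ℝ) = ∑ i, Real.log (g i) := by
    rw [Nat.cast_prod, Real.log_prod]
    intro i _
    exact_mod_cast hg i
  rw [h1]
  push_cast
  rw [Finset.mul_sum, ← Finset.sum_neg_distrib]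

lemma Eb_mul_conj (t : ℝ) (m n : ℕ) :
    Eb t m * (starRingEnd ℂ) (Eb t n) = Complex.exp (cb m n * (t : ℂ)) := by
  rw [Eb, Eb, ← Complex.exp_conj, ← Complex.exp_add, cb]
  congr 1
  simp only [map_neg, map_mul, Complex.conj_I, Complex.conj_ofReal]
  ring

lemma Eb_continuous (m : ℕ) : Continuous (fun t : ℝ => Eb t m) := by
  unfold Eb; fun_prop

lemma cb_ne_zero {m n : ℕ} (hm : 0 < m) (hn : 0 < n) (h : m ≠ n) : cb m n ≠ 0 := by
  rw [cb]
  intro hc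
  rcases mul_eq_zero.1 hc with h1 | h1
  · exact Complex.I_ne_zero h1
  · rw [sub_eq_zero] at h1
    have : Real.log n = Real.log m := by exact_mod_cast h1
    have := Real.log_injOn_pos (Set.mem_Ioi.2 (by exact_mod_cast hn))
      (Set.mem_Ioi.2 (by exact_mod_cast hm)) this
    exact h (by exact_mod_cast this.symm)

lemma abs_exp_cb (m n : ℕ) (T : ℝ) : Complex.abs (Complex.exp (cb m n * (T : ℂ))) = 1 := by
  rw [Complex.abs_exp]
  have : (cb m n * (T : ℂ)).re = 0 := by
    rw [cb]
    simp only [Complex.mul_re, Complex.mul_im, Complex.I_re, Complex.I_im, Complex.sub_re,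
      Complex.sub_im, Complex.ofReal_re, Complex.ofReal_im]
    ring
  rw [this, Real.exp_zero]

lemma int_Eb (m n : ℕ) (hm : 0 < m) (hn : 0 < n) (T : ℝ) :
    (∫ t in (0:ℝ)..T, Eb t m * (starRingEnd ℂ) (Eb t n))
      = if m = n then (T : ℂ) else (Complex.exp (cb m n * T) - 1) / cb m n := by
  split_ifs with h
  · subst h
    have : ∀ t : ℝ, Eb t m * (starRingEnd ℂ) (Eb t m) = 1 := by
      intro t; rw [Eb_mul_conj, cb, sub_self, mul_zero, zero_mul, Complex.exp_zero]
    rw [integral_congr (fun t _ => this t)]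
    simp
  · rw [integral_congr (g := fun t : ℝ => Complex.exp (cb m n * (t : ℂ)))
      (fun t _ => Eb_mul_conj t m n),
      integral_exp_mul_complex (cb_ne_zero hm hn h)]
    norm_num

lemma multiset_prime_prod_unique (f g : Multiset ℕ) (hf : ∀ x ∈ f, x.Prime)
    (hg : ∀ x ∈ g, x.Prime) (h : f.prod = g.prod) : f = g := by
  have := UniqueFactorizationMonoid.factors_unique
    (fun x hx => hf x hx) (fun x hx => hg x hx) (associated_iff_eq.2 h)
  rwa [associated_eq_eq, Multiset.rel_eq] at this

section
variable (a : ℕ → ℂ) (s : Finset ℕ) (k : ℕ)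

noncomputable def Pf : Finset (Fin k → ℕ) := Fintype.piFinset (fun _ : Fin k => s)
noncomputable def bf (m : ℕ) : ℂ :=
  ∑ g ∈ (Pf s k).filter (fun g => ∏ i, g i = m), ∏ i, a (g i)

lemma pow_expand (hprime : ∀ p ∈ s, p.Prime) (t : ℝ) :
    (∑ p ∈ s, a p * Eb t p) ^ k
      = ∑ m ∈ (Pf s k).image (fun g => ∏ i, g i), bf a s k m * Eb t m := by
  classical
  have hPmem : ∀ g ∈ Pf s k, ∀ i, g i ∈ s := fun g hg i => (Fintype.mem_piFinset.1 hg) i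
  have h1 : (∑ p ∈ s, a p * Eb t p) ^ k
      = ∑ g ∈ Pf s k, (∏ i, a (g i)) * Eb t (∏ i, g i) := by
    calc (∑ p ∈ s, a p * Eb t p) ^ k = ∏ _i : Fin k, ∑ p ∈ s, a p * Eb t p := by
          rw [Finset.prod_const, Finset.card_univ, Fintype.card_fin]
      _ = ∑ g ∈ Pf s k, ∏ i, (a (g i) * Eb t (g i)) := Finset.prod_univ_sum _ _
      _ = ∑ g ∈ Pf s k, (∏ i, a (g i)) * Eb t (∏ i, g i) := by
          refine Finset.sum_congr rfl fun g hg => ?_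
          rw [Finset.prod_mul_distrib, Eb_prod t g fun i => (hprime _ (hPmem g hg i)).ne_zero]
  rw [h1, ← Finset.sum_fiberwise_of_maps_to
    (fun g hg => Finset.mem_image_of_mem (fun g : Fin k → ℕ => ∏ i, g i) hg)]
  refine Finset.sum_congr rfl fun m hm => ?_
  rw [bf, Finset.sum_mul]
  refine Finset.sum_congr rfl fun g hg => ?_
  rw [(Finset.mem_filter.1 hg).2]

lemma fiber_const (hprime : ∀ p ∈ s, p.Prime) (m : ℕ)
    (g : Fin k → ℕ) (hg : g ∈ (Pf s k).filter (fun g => ∏ i, g i = m))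
    (h' : Fin k → ℕ) (hh' : h' ∈ (Pf s k).filter (fun g => ∏ i, g i = m)) :
    ∏ i, a (g i) = ∏ i, a (h' i) := by
  obtain ⟨hgP, hgm⟩ := Finset.mem_filter.1 hg
  obtain ⟨hhP, hhm⟩ := Finset.mem_filter.1 hh'
  have hmulti : Multiset.map g Finset.univ.val = Multiset.map h' Finset.univ.val := by
    apply multiset_prime_prod_unique
    · intro x hx
      obtain ⟨i, _, rfl⟩ := Multiset.mem_map.1 hx
      exact hprime _ ((Fintype.mem_piFinset.1 hgP) i)
    · intro x hx
      obtain ⟨i, _, rfl⟩ := Multiset.mem_map.1 hx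
      exact hprime _ ((Fintype.mem_piFinset.1 hhP) i)
    · show (Multiset.map g Finset.univ.val).prod = (Multiset.map h' Finset.univ.val).prod
      exact hgm.trans hhm.symm
  have e1 : ∏ i, a (g i) = ((Finset.univ.val.map g).map a).prod := by
    rw [Multiset.map_map]; rfl
  have e2 : ∏ i, a (h' i) = ((Finset.univ.val.map h').map a).prod := by
    rw [Multiset.map_map]; rfl
  rw [e1, e2, hmulti]

lemma abs_b_sum (hprime : ∀ p ∈ s, p.Prime) :
    ∑ m ∈ (Pf s k).image (fun g => ∏ i, g i), Complex.abs (bf a s k m)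
      = (∑ p ∈ s, Complex.abs (a p)) ^ k := by
  classical
  have h2 : (∑ p ∈ s, Complex.abs (a p)) ^ k
      = ∑ g ∈ Pf s k, ∏ i, Complex.abs (a (g i)) := by
    calc (∑ p ∈ s, Complex.abs (a p)) ^ k
        = ∏ _i : Fin k, ∑ p ∈ s, Complex.abs (a p) := by
          rw [Finset.prod_const, Finset.card_univ, Fintype.card_fin]
      _ = ∑ g ∈ Pf s k, ∏ i, Complex.abs (a (g i)) := Finset.prod_univ_sum _ _
  rw [h2, ← Finset.sum_fiberwise_of_maps_to
    (fun g hg => Finset.mem_image_of_mem (fun g : Fin k → ℕ => ∏ i, g i) hg)]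
  refine Finset.sum_congr rfl fun m hm => ?_
  obtain ⟨g0, hg0P, hg0m⟩ := Finset.mem_image.1 hm
  have hg0f : g0 ∈ (Pf s k).filter (fun g => ∏ i, g i = m) :=
    Finset.mem_filter.2 ⟨hg0P, hg0m⟩
  have hbm : bf a s k m
      = ((Pf s k).filter (fun g => ∏ i, g i = m)).card • (∏ i, a (g0 i)) := by
    rw [bf, Finset.sum_congr rfl (fun g hg => fiber_const a s k hprime m g hg g0 hg0f),
      Finset.sum_const]
  rw [hbm, nsmul_eq_mul, map_mul, Complex.abs_natCast]
  have : ∀ g ∈ (Pf s k).filter (fun g => ∏ i, g i = m),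
      ∏ i, Complex.abs (a (g i)) = Complex.abs (∏ i, a (g0 i)) := by
    intro g hg
    rw [← map_prod, fiber_const a s k hprime m g hg g0 hg0f]
  rw [Finset.sum_congr rfl this, Finset.sum_const, nsmul_eq_mul]

lemma card_M_le (hprime : ∀ p ∈ s, p.Prime) :
    ((Pf s k).image (fun g => ∏ i, g i)).card ≤ (k + 1) ^ s.card := by
  classical
  have hfacts : ∀ m ∈ (Pf s k).image (fun g => ∏ i, g i),
      m ≠ 0 ∧ (∀ p, m.factorization p ≤ k) ∧ (∀ p, m.factorization p ≠ 0 → p ∈ s) := by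
    intro m hm
    obtain ⟨g, hgP, rfl⟩ := Finset.mem_image.1 hm
    have hgp : ∀ i : Fin k, (g i).Prime := fun i => hprime _ ((Fintype.mem_piFinset.1 hgP) i)
    have hgne : ∀ i : Fin k, g i ≠ 0 := fun i => (hgp i).ne_zero
    have hm0 : (∏ i, g i) ≠ 0 := Finset.prod_ne_zero_iff.2 fun i _ => hgne i
    have hfact : (∏ i, g i).factorization = ∑ i, (g i).factorization :=
      Nat.factorization_prod (fun i _ => hgne i)
    refine ⟨hm0, fun p => ?_, fun p hp0 => ?_⟩
    · rw [hfact, Finset.sum_apply']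
      calc ∑ i : Fin k, (g i).factorization p ≤ ∑ _i : Fin k, 1 := by
            refine Finset.sum_le_sum fun i _ => ?_
            rw [(hgp i).factorization, Finsupp.single_apply]
            split <;> omega
        _ = k := by simp
    · have hps : p ∈ (∏ i, g i).primeFactors := by
        rw [← Nat.support_factorization]; exact Finsupp.mem_support_iff.2 hp0
      have hpp := Nat.prime_of_mem_primeFactors hps
      have hpd := Nat.dvd_of_mem_primeFactors hps
      obtain ⟨i, _, hdvd⟩ := (Prime.dvd_finset_prod_iff hpp.prime g).1 hpd
      have : p = g i := ((Nat.prime_dvd_prime_iff_eq hpp (hgp i)).1 hdvd)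
      rw [this]
      exact (Fintype.mem_piFinset.1 hgP) i
  have h := Finset.card_le_card_of_injOn
    (s := (Pf s k).image (fun g => ∏ i, g i))
    (fun m : ℕ => (fun p _ => m.factorization p : ∀ p ∈ s, ℕ))
    (t := s.pi (fun _ => Finset.range (k + 1))) ?_ ?_
  · calc ((Pf s k).image (fun g => ∏ i, g i)).card
        ≤ (s.pi fun _ => Finset.range (k+1)).card := h
      _ = (k+1) ^ s.card := by rw [Finset.card_pi, Finset.prod_const, Finset.card_range]
  · intro m hm
    rw [Finset.mem_coe, Finset.mem_pi]
    intro p _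
    rw [Finset.mem_range, Nat.lt_succ_iff]
    exact (hfacts m hm).2.1 p
  · intro m hm m' hm' heq
    have h1 := hfacts m (Finset.mem_coe.1 hm)
    have h2 := hfacts m' (Finset.mem_coe.1 hm')
    have hfeq : m.factorization = m'.factorization := by
      ext p
      by_cases hp : p ∈ s
      · exact congr_fun (congr_fun heq p) hp
      · have e1 : m.factorization p = 0 := by
          by_contra h; exact hp (h1.2.2 p h)
        have e2 : m'.factorization p = 0 := by
          by_contra h; exact hp (h2.2.2 p h)
        rw [e1, e2]
    exact Nat.factorization_inj h1.1 h2.1 hfeq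

end

lemma int_expand (b : ℕ → ℂ) (M : Finset ℕ) (hM : ∀ m ∈ M, 0 < m) (T : ℝ) :
    (∫ t in (0:ℝ)..T, (∑ m ∈ M, b m * Eb t m) * (starRingEnd ℂ) (∑ n ∈ M, b n * Eb t n))
      = ∑ m ∈ M, ∑ n ∈ M, (b m * (starRingEnd ℂ) (b n)) *
          (if m = n then (T : ℂ) else (Complex.exp (cb m n * T) - 1) / cb m n) := by
  have hpt : ∀ t : ℝ, (∑ m ∈ M, b m * Eb t m) * (starRingEnd ℂ) (∑ n ∈ M, b n * Eb t n)
      = ∑ m ∈ M, ∑ n ∈ M, (b m * (starRingEnd ℂ) (b n)) * (Eb t m * (starRingEnd ℂ) (Eb t n)) := by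
    intro t
    rw [map_sum, Finset.sum_mul_sum]
    refine Finset.sum_congr rfl fun m _ => Finset.sum_congr rfl fun n _ => ?_
    rw [map_mul]
    ring
  rw [intervalIntegral.integral_congr (fun t _ => hpt t)]
  rw [intervalIntegral.integral_finset_sum]
  · refine Finset.sum_congr rfl fun m hm => ?_
    rw [intervalIntegral.integral_finset_sum]
    · refine Finset.sum_congr rfl fun n hn => ?_
      rw [intervalIntegral.integral_const_mul, int_Eb m n (hM m hm) (hM n hn)]
    · intro n _
      apply Continuous.intervalIntegrable
      exact continuous_const.mul ((Eb_continuous m).mul ((Eb_continuous n).star))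
  · intro m _
    apply Continuous.intervalIntegrable
    apply continuous_finset_sum
    intro n _
    exact continuous_const.mul ((Eb_continuous m).mul ((Eb_continuous n).star))

lemma int_diff (b : ℕ → ℂ) (M : Finset ℕ) (hM : ∀ m ∈ M, 0 < m) (T : ℝ) :
    (∫ t in (0:ℝ)..T, (∑ m ∈ M, b m * Eb t m) * (starRingEnd ℂ) (∑ n ∈ M, b n * Eb t n))
        - (∑ m ∈ M, b m * (starRingEnd ℂ) (b m)) * (T : ℂ)
      = ∑ m ∈ M, ∑ n ∈ M, (if m = n then 0 else
          (b m * (starRingEnd ℂ) (b n)) * ((Complex.exp (cb m n * T) - 1) / cb m n)) := by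
  rw [int_expand b M hM T, Finset.sum_mul, ← Finset.sum_sub_distrib]
  refine Finset.sum_congr rfl fun m hm => ?_
  have hsplit : ∀ n ∈ M, (b m * (starRingEnd ℂ) (b n)) *
      (if m = n then (T : ℂ) else (Complex.exp (cb m n * T) - 1) / cb m n)
      = (if m = n then (b m * (starRingEnd ℂ) (b n)) * (T : ℂ) else 0)
        + (if m = n then 0 else
          (b m * (starRingEnd ℂ) (b n)) * ((Complex.exp (cb m n * T) - 1) / cb m n)) := by
    intro n _
    split_ifs <;> ring
  rw [Finset.sum_congr rfl hsplit, Finset.sum_add_distrib, Finset.sum_ite_eq M m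
    (fun n => (b m * (starRingEnd ℂ) (b n)) * (T : ℂ)), if_pos hm]
  ring

lemma meanval (b : ℕ → ℂ) (M : Finset ℕ) (hM : ∀ m ∈ M, 0 < m) (S : ℝ)
    (hS : ∀ t : ℝ, Complex.abs (∑ m ∈ M, b m * Eb t m) ≤ S) :
    ∑ m ∈ M, Complex.abs (b m) ^ 2 ≤ S ^ 2 := by
  classical
  have hS0 : 0 ≤ S := le_trans (AbsoluteValue.nonneg _ _) (hS 0)
  set Cst : ℝ := ∑ m ∈ M, ∑ n ∈ M, (if m = n then 0 else
    Complex.abs (b m) * Complex.abs (b n) * (2 / Complex.abs (cb m n))) with hCst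
  have hCst0 : 0 ≤ Cst := by
    refine Finset.sum_nonneg fun m _ => Finset.sum_nonneg fun n _ => ?_
    split
    · exact le_refl 0
    · positivity
  have hoff : ∀ T : ℝ, Complex.abs (∑ m ∈ M, ∑ n ∈ M, (if m = n then 0 else
      (b m * (starRingEnd ℂ) (b n)) * ((Complex.exp (cb m n * T) - 1) / cb m n))) ≤ Cst := by
    intro T
    refine le_trans (AbsoluteValue.sum_le _ _ _) (Finset.sum_le_sum fun m hm => ?_)
    refine le_trans (AbsoluteValue.sum_le _ _ _) (Finset.sum_le_sum fun n hn => ?_)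
    split_ifs with h
    · simp
    · rw [map_mul, map_mul, map_div₀, Complex.abs_conj]
      have hc : 0 < Complex.abs (cb m n) :=
        AbsoluteValue.pos _ (cb_ne_zero (hM m hm) (hM n hn) h)
      have h2 : Complex.abs (Complex.exp (cb m n * T) - 1) ≤ 2 := by
        calc Complex.abs (Complex.exp (cb m n * T) - 1)
            ≤ Complex.abs (Complex.exp (cb m n * T)) + Complex.abs 1 := by
              simpa only [Complex.norm_eq_abs] using
                norm_sub_le (Complex.exp (cb m n * T)) 1
          _ ≤ 2 := by rw [abs_exp_cb, map_one]; norm_num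
      gcongr
  have hcast : (∑ m ∈ M, b m * (starRingEnd ℂ) (b m))
      = ((∑ m ∈ M, Complex.abs (b m) ^ 2 : ℝ) : ℂ) := by
    push_cast
    refine Finset.sum_congr rfl fun m _ => ?_
    rw [Complex.mul_conj]
    norm_cast
    exact (Complex.sq_abs _).symm
  have hB0 : 0 ≤ ∑ m ∈ M, Complex.abs (b m) ^ 2 :=
    Finset.sum_nonneg fun m _ => sq_nonneg _
  have hIb : ∀ T : ℝ, 0 ≤ T →
      Complex.abs (∫ t in (0:ℝ)..T,
        (∑ m ∈ M, b m * Eb t m) * (starRingEnd ℂ) (∑ n ∈ M, b n * Eb t n)) ≤ S ^ 2 * T := by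
    intro T hT
    have := intervalIntegral.norm_integral_le_of_norm_le_const
      (a := (0:ℝ)) (b := T) (C := S ^ 2)
      (f := fun t => (∑ m ∈ M, b m * Eb t m) * (starRingEnd ℂ) (∑ n ∈ M, b n * Eb t n)) ?_
    · rw [Complex.norm_eq_abs] at this
      calc Complex.abs _ ≤ S ^ 2 * |T - 0| := this
        _ = S ^ 2 * T := by rw [sub_zero, abs_of_nonneg hT]
    · intro t _
      rw [Complex.norm_eq_abs, map_mul, Complex.abs_conj, sq]
      exact mul_le_mul (hS t) (hS t) (AbsoluteValue.nonneg _ _) hS0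
  have hmain : ∀ T : ℝ, 0 < T → (∑ m ∈ M, Complex.abs (b m) ^ 2) * T ≤ S ^ 2 * T + Cst := by
    intro T hT
    have hd := int_diff b M hM T
    have h1 : ((∑ m ∈ M, Complex.abs (b m) ^ 2) * T : ℝ)
        = Complex.abs ((∑ m ∈ M, b m * (starRingEnd ℂ) (b m)) * (T : ℂ)) := by
      rw [hcast, ← Complex.ofReal_mul, Complex.abs_ofReal,
        abs_of_nonneg (mul_nonneg hB0 hT.le)]
    rw [h1]
    have h2 : (∑ m ∈ M, b m * (starRingEnd ℂ) (b m)) * (T : ℂ)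
        = (∫ t in (0:ℝ)..T,
            (∑ m ∈ M, b m * Eb t m) * (starRingEnd ℂ) (∑ n ∈ M, b n * Eb t n))
          - ∑ m ∈ M, ∑ n ∈ M, (if m = n then 0 else
            (b m * (starRingEnd ℂ) (b n)) * ((Complex.exp (cb m n * T) - 1) / cb m n)) := by
      rw [← hd]; ring
    rw [h2]
    calc Complex.abs _ ≤ Complex.abs (∫ t in (0:ℝ)..T,
            (∑ m ∈ M, b m * Eb t m) * (starRingEnd ℂ) (∑ n ∈ M, b n * Eb t n))
          + Complex.abs (∑ m ∈ M, ∑ n ∈ M, (if m = n then 0 else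
            (b m * (starRingEnd ℂ) (b n)) * ((Complex.exp (cb m n * T) - 1) / cb m n))) := by
          simpa only [Complex.norm_eq_abs] using norm_sub_le
            (∫ t in (0:ℝ)..T,
              (∑ m ∈ M, b m * Eb t m) * (starRingEnd ℂ) (∑ n ∈ M, b n * Eb t n))
            (∑ m ∈ M, ∑ n ∈ M, (if m = n then 0 else
              (b m * (starRingEnd ℂ) (b n)) * ((Complex.exp (cb m n * T) - 1) / cb m n)))
      _ ≤ S ^ 2 * T + Cst := add_le_add (hIb T hT.le) (hoff T)
  by_contra hcon
  push_neg at hcon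
  set D : ℝ := ∑ m ∈ M, Complex.abs (b m) ^ 2 - S ^ 2 with hD
  have hDpos : 0 < D := by rw [hD]; linarith
  have hTpos : 0 < (Cst + 1) / D := by positivity
  have := hmain ((Cst + 1) / D) hTpos
  have hexp : D * ((Cst + 1) / D) = Cst + 1 := by field_simp
  nlinarith [hexp]

theorem stmt_17 (a : ℕ → ℂ) (hfin : (Function.support a).Finite)
    (hsupp : ∀ n, a n ≠ 0 → n.Prime) :
    ∑ᶠ p, ‖a p‖
      ≤ ⨆ t : ℝ, ‖∑ᶠ p, a p *
          Complex.exp (-(Complex.I * (t : ℂ) * (Real.log p : ℂ)))‖ := by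
  simp only [Complex.norm_eq_abs]
  classical
  set s : Finset ℕ := hfin.toFinset with hs
  have hprime : ∀ p ∈ s, p.Prime := fun p hp => hsupp p (hfin.mem_toFinset.1 hp)
  have hL : ∑ᶠ p, Complex.abs (a p) = ∑ p ∈ s, Complex.abs (a p) := by
    apply finsum_eq_sum_of_support_subset
    intro p hp
    simp only [Function.mem_support] at hp
    have hap : a p ≠ 0 := fun h => hp (by rw [h, map_zero])
    simpa [hs] using hfin.mem_toFinset.2 hap
  have hR : ∀ t : ℝ, (∑ᶠ p, a p *
      Complex.exp (-(Complex.I * (t : ℂ) * (Real.log p : ℂ)))) = ∑ p ∈ s, a p * Eb t p := by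
    intro t
    apply finsum_eq_sum_of_support_subset
    intro p hp
    simp only [Function.mem_support] at hp
    have hap : a p ≠ 0 := fun h => hp (by rw [h, zero_mul])
    simpa [hs] using hfin.mem_toFinset.2 hap
  rw [hL]
  have hsup_congr : (⨆ t : ℝ, Complex.abs (∑ᶠ p, a p *
        Complex.exp (-(Complex.I * (t : ℂ) * (Real.log p : ℂ)))))
      = ⨆ t : ℝ, Complex.abs (∑ p ∈ s, a p * Eb t p) := by
    refine iSup_congr fun t => ?_
    rw [hR t]
  rw [hsup_congr]
  set A := ∑ p ∈ s, Complex.abs (a p) with hA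
  set S := ⨆ t : ℝ, Complex.abs (∑ p ∈ s, a p * Eb t p) with hS
  have habs_le : ∀ t, Complex.abs (∑ p ∈ s, a p * Eb t p) ≤ A := by
    intro t
    refine le_trans (AbsoluteValue.sum_le _ _ _) (le_of_eq ?_)
    refine Finset.sum_congr rfl fun p _ => ?_
    rw [map_mul, Eb_abs, mul_one]
  have hBdd : BddAbove (Set.range fun t : ℝ => Complex.abs (∑ p ∈ s, a p * Eb t p)) :=
    ⟨A, by rintro x ⟨t, rfl⟩; exact habs_le t⟩
  have hfS : ∀ t, Complex.abs (∑ p ∈ s, a p * Eb t p) ≤ S := fun t => le_ciSup hBdd t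
  have hS0 : 0 ≤ S := le_trans (AbsoluteValue.nonneg _ _) (hfS 0)
  have hA0 : 0 ≤ A := Finset.sum_nonneg fun p _ => AbsoluteValue.nonneg _ _
  have key : ∀ k : ℕ, (A ^ k) ^ 2 ≤ (((k : ℝ) + 1) ^ s.card) * (S ^ k) ^ 2 := by
    intro k
    set M := (Pf s k).image (fun g => ∏ i, g i) with hM
    have hMpos : ∀ m ∈ M, 0 < m := by
      intro m hm
      obtain ⟨g, hgP, rfl⟩ := Finset.mem_image.1 hm
      exact Finset.prod_pos fun i _ => (hprime _ ((Fintype.mem_piFinset.1 hgP) i)).pos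
    have hSk : ∀ t : ℝ, Complex.abs (∑ m ∈ M, bf a s k m * Eb t m) ≤ S ^ k := by
      intro t
      rw [hM, ← pow_expand a s k hprime t, map_pow]
      exact pow_le_pow_left₀ (AbsoluteValue.nonneg _ _) (hfS t) k
    have hmv := meanval (bf a s k) M hMpos (S ^ k) hSk
    have hCS : (A ^ k) ^ 2 ≤ (M.card : ℝ) * ∑ m ∈ M, Complex.abs (bf a s k m) ^ 2 := by
      calc (A ^ k) ^ 2 = (∑ m ∈ M, Complex.abs (bf a s k m)) ^ 2 := by
            rw [hA, hM, abs_b_sum a s k hprime]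
        _ ≤ (M.card : ℝ) * ∑ m ∈ M, Complex.abs (bf a s k m) ^ 2 := by
            have h := Finset.sum_mul_sq_le_sq_mul_sq M (fun _ => (1:ℝ))
              (fun m => Complex.abs (bf a s k m))
            simpa using h
    have hcard : (M.card : ℝ) ≤ ((k : ℝ) + 1) ^ s.card := by
      have := card_M_le s k hprime
      rw [hM]
      exact_mod_cast this
    calc (A ^ k) ^ 2 ≤ (M.card : ℝ) * ∑ m ∈ M, Complex.abs (bf a s k m) ^ 2 := hCS
      _ ≤ (((k : ℝ) + 1) ^ s.card) * (S ^ k) ^ 2 := by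
          refine mul_le_mul hcard hmv (Finset.sum_nonneg fun m _ => sq_nonneg _) (by positivity)
  by_contra hcon
  push_neg at hcon
  rcases eq_or_lt_of_le hS0 with hSz | hSpos
  · have h1 := key 1
    rw [← hSz] at h1
    simp only [pow_one] at h1
    nlinarith
  · set q := (A / S) ^ 2 with hq
    have hq1 : 1 < q := by
      have hAS : 1 < A / S := (one_lt_div hSpos).2 hcon
      rw [hq]
      nlinarith
    have hq0 : 0 < q := lt_trans one_pos hq1
    have hqk : ∀ k : ℕ, q ^ k ≤ ((k : ℝ) + 1) ^ s.card := by
      intro k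
      have hk := key k
      have hSkpos : 0 < (S ^ k) ^ 2 := by positivity
      have hqexp : q ^ k * (S ^ k) ^ 2 = (A ^ k) ^ 2 := by
        rw [hq]
        field_simp
        rw [div_pow, ← pow_mul, ← pow_mul, ← pow_mul, ← pow_mul, mul_comm 2 k]
        exact div_mul_cancel₀ _ (pow_ne_zero _ hSpos.ne')
      have : q ^ k * (S ^ k) ^ 2 ≤ (((k : ℝ) + 1) ^ s.card) * (S ^ k) ^ 2 := by
        rw [hqexp]; exact hk
      exact le_of_mul_le_mul_right this hSkpos
    have htend : Filter.Tendsto (fun k : ℕ => ((k : ℝ)) ^ s.card / q ^ k)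
        Filter.atTop (nhds 0) := tendsto_pow_const_div_const_pow_of_one_lt s.card hq1
    have htend2 : Filter.Tendsto (fun k : ℕ => ((k : ℝ) + 1) ^ s.card / q ^ k)
        Filter.atTop (nhds 0) := by
      have h1 := htend.comp (Filter.tendsto_add_atTop_nat 1)
      have h2 := h1.const_mul q
      rw [mul_zero] at h2
      refine h2.congr fun k => ?_
      simp only [Function.comp_apply]
      push_cast
      rw [pow_succ]
      field_simp
    have hev : ∀ᶠ k : ℕ in Filter.atTop, ((k : ℝ) + 1) ^ s.card / q ^ k < 1 :=
      htend2.eventually_lt_const one_pos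
    obtain ⟨k, hk⟩ := hev.exists
    have hge : (1:ℝ) ≤ ((k : ℝ) + 1) ^ s.card / q ^ k :=
      (one_le_div (by positivity)).2 (hqk k)
    linarith
end
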